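/- Let m be a square-integrable random vector with values in ℝⁿ and mean zero on a probability space (Ω, ℱ, ℙ), let 𝒢 ⊆ ℱ be a sub-σ-algebra, and set u = 𝔼[m | 𝒢], Σ_m = 𝔼[m mᵀ], Σ_u = 𝔼[u uᵀ]. Then for every matrix A ∈ ℝ^{n×n} and vector b ∈ ℝⁿ, 𝔼[‖A m − b − u‖²] = Tr(V Σ_u) + Tr(Aᵀ A Σ_m) + ‖b‖², where V = I − (A + Aᵀ). In particular, the encoder's cheap-talk cost is an affine function of the posterior mean covariance Σ_u with linear kernel V. -/

import Mathlib

open MeasureTheory Matrix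

section Aux

variable {Ω : Type*} {G F : MeasurableSpace Ω} {μ : Measure Ω}

theorem aux_int_mul {f g : Ω → ℝ} (hf : MemLp f 2 μ) (hg : MemLp g 2 μ) :
    Integrable (fun ω => f ω * g ω) μ := by
  have h : MemLp (f • g) 1 μ := hg.smul hf
  exact memLp_one_iff_integrable.mp h

theorem aux_memLp_condexp [IsProbabilityMeasure μ] (hG : G ≤ F)
    {f : Ω → ℝ} (hf : MemLp f 2 μ) : MemLp (μ[f|G]) 2 μ := by
  haveI : SigmaFinite (μ.trim hG) := inferInstance
  set g : Lp ℝ 2 μ := (condExpL2 ℝ ℝ hG (hf.toLp f) : Lp ℝ 2 μ) with hgdef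
  have h1 := lpMeas.aestronglyMeasurable (𝕜 := ℝ) (condExpL2 ℝ ℝ hG (hf.toLp f))
  have h2 := fun s (hs : MeasurableSet[G] s) (hμs : μ s ≠ ⊤) =>
    integral_condExpL2_eq (𝕜 := ℝ) hG (hf.toLp f) hs hμs
  have hae : (g : Ω → ℝ) =ᵐ[μ] μ[f|G] := by
    refine ae_eq_condExp_of_forall_setIntegral_eq (g := (g : Ω → ℝ)) hG
      (hf.integrable one_le_two)
      (fun s _ _ => ((Lp.memLp g).integrable one_le_two).integrableOn)
      (fun s hs hμs => ?_) h1
    rw [show (g : Ω → ℝ) = ((condExpL2 ℝ ℝ hG (hf.toLp f) : Lp ℝ 2 μ) : Ω → ℝ) from rfl]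
    rw [h2 s hs hμs.ne]
    exact setIntegral_congr_ae (hG s hs) (hf.coeFn_toLp.mono fun x hx _ => hx)
  exact (Lp.memLp g).ae_eq hae

theorem aux_condexp_coord [IsProbabilityMeasure μ] (hG : G ≤ F) {n : ℕ}
    {m : Ω → EuclideanSpace ℝ (Fin n)} (hm : MemLp m 2 μ) (i : Fin n) :
    (fun ω => (μ[m|G]) ω i) =ᵐ[μ] μ[(fun ω => m ω i)|G] := by
  haveI : SigmaFinite (μ.trim hG) := inferInstance
  have hmi : MemLp (fun ω => m ω i) 2 μ :=
    ((EuclideanSpace.proj (𝕜 := ℝ) i).comp_memLp' hm)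
  have hmint : Integrable m μ := hm.integrable one_le_two
  refine ae_eq_condExp_of_forall_setIntegral_eq hG (hmi.integrable one_le_two)
    (fun s _ _ => (((EuclideanSpace.proj (𝕜 := ℝ) i).integrable_comp
      integrable_condExp)).integrableOn)
    (fun s hs hμs => ?_)
    (((EuclideanSpace.proj (𝕜 := ℝ) i).continuous.comp_stronglyMeasurable
      stronglyMeasurable_condExp).aestronglyMeasurable)
  have h1 : ∫ x in s, (μ[m|G]) x i ∂μ
      = (EuclideanSpace.proj (𝕜 := ℝ) i) (∫ x in s, (μ[m|G]) x ∂μ) :=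
    ((EuclideanSpace.proj (𝕜 := ℝ) i).integral_comp_comm integrable_condExp.integrableOn)
  have h2 : ∫ x in s, m x i ∂μ = (EuclideanSpace.proj (𝕜 := ℝ) i) (∫ x in s, m x ∂μ) :=
    ((EuclideanSpace.proj (𝕜 := ℝ) i).integral_comp_comm hmint.integrableOn)
  rw [h1, h2, setIntegral_condExp hG hmint hs]

theorem aux_key [IsProbabilityMeasure μ] (hG : G ≤ F) {f g : Ω → ℝ}
    (hf : MemLp f 2 μ) (hug : MemLp (μ[g|G]) 2 μ) :
    ∫ ω, f ω * (μ[g|G]) ω ∂μ = ∫ ω, (μ[f|G]) ω * (μ[g|G]) ω ∂μ := by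
  haveI : SigmaFinite (μ.trim hG) := inferInstance
  have hint : Integrable ((μ[g|G]) * f) μ := aux_int_mul hug hf
  have h := condExp_mul_of_stronglyMeasurable_left (m := G) stronglyMeasurable_condExp
    hint (hf.integrable one_le_two)
  calc ∫ ω, f ω * (μ[g|G]) ω ∂μ = ∫ ω, ((μ[g|G]) * f) ω ∂μ := by
        simp_rw [Pi.mul_apply, mul_comm]
    _ = ∫ ω, (μ[(μ[g|G]) * f|G]) ω ∂μ := (integral_condExp hG).symm
    _ = ∫ ω, ((μ[g|G]) * (μ[f|G])) ω ∂μ := integral_congr_ae h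
    _ = ∫ ω, (μ[f|G]) ω * (μ[g|G]) ω ∂μ := by simp_rw [Pi.mul_apply, mul_comm]

theorem aux_sum_mul {n : ℕ} (M : Fin n → Ω → ℝ) (g : Ω → ℝ) (a : Fin n → ℝ)
    (hint : ∀ j, Integrable (fun ω => M j ω * g ω) μ) :
    ∫ ω, (∑ j, a j * M j ω) * g ω ∂μ = ∑ j, a j * ∫ ω, M j ω * g ω ∂μ := by
  have h : ∀ ω, (∑ j, a j * M j ω) * g ω = ∑ j, a j * (M j ω * g ω) := by
    intro ω; rw [Finset.sum_mul]; exact Finset.sum_congr rfl fun j _ => by ring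
  rw [show (fun ω => (∑ j, a j * M j ω) * g ω) = fun ω => ∑ j, a j * (M j ω * g ω) from
    funext h]
  rw [integral_finset_sum _ (fun j _ => (hint j).const_mul (a j))]
  exact Finset.sum_congr rfl fun j _ => integral_const_mul _ _

theorem aux_claim [IsProbabilityMeasure μ] {n : ℕ} (M U : Fin n → Ω → ℝ)
    (hM2 : ∀ j, MemLp (M j) 2 μ) (hU2 : ∀ j, MemLp (U j) 2 μ)
    (hMmean : ∀ j, ∫ ω, M j ω ∂μ = 0) (hUmean : ∀ j, ∫ ω, U j ω ∂μ = 0)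
    (hkey : ∀ j i, ∫ ω, M j ω * U i ω ∂μ = ∫ ω, U j ω * U i ω ∂μ)
    (a : Fin n → ℝ) (c : ℝ) (i : Fin n) :
    ∫ ω, ((∑ j, a j * M j ω) - c - U i ω) ^ 2 ∂μ
      = (∑ j, a j * ∑ k, a k * ∫ ω, M k ω * M j ω ∂μ)
        - 2 * (∑ j, a j * ∫ ω, U j ω * U i ω ∂μ)
        + ∫ ω, U i ω * U i ω ∂μ + c ^ 2 := by
  set S : Ω → ℝ := fun ω => ∑ j, a j * M j ω with hSdef
  have hS2 : MemLp S 2 μ :=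
    memLp_finset_sum _ (fun j _ => (hM2 j).const_mul (a j))
  have ISS : Integrable (fun ω => S ω * S ω) μ := aux_int_mul hS2 hS2
  have ISU : Integrable (fun ω => S ω * U i ω) μ := aux_int_mul hS2 (hU2 i)
  have IUU : Integrable (fun ω => U i ω * U i ω) μ := aux_int_mul (hU2 i) (hU2 i)
  have IS : Integrable S μ := hS2.integrable one_le_two
  have IU : Integrable (U i) μ := (hU2 i).integrable one_le_two
  have hexp : (fun ω => (S ω - c - U i ω) ^ 2)
      = fun ω => ((((S ω * S ω - 2 * (S ω * U i ω)) + U i ω * U i ω)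
          - (2 * c) * S ω) + (2 * c) * U i ω) + c ^ 2 := by
    funext ω; ring
  rw [hexp]
  have J1 : Integrable (fun ω => S ω * S ω - 2 * (S ω * U i ω)) μ := by
    exact ISS.sub (ISU.const_mul 2)
  have J2 : Integrable (fun ω => S ω * S ω - 2 * (S ω * U i ω) + U i ω * U i ω) μ := by
    exact J1.add IUU
  have J3 : Integrable (fun ω => S ω * S ω - 2 * (S ω * U i ω) + U i ω * U i ω
      - 2 * c * S ω) μ := by exact J2.sub (IS.const_mul (2 * c))
  have J4 : Integrable (fun ω => S ω * S ω - 2 * (S ω * U i ω) + U i ω * U i ω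
      - 2 * c * S ω + 2 * c * U i ω) μ := by exact J3.add (IU.const_mul (2 * c))
  rw [integral_add J4 (integrable_const _), integral_add J3 (IU.const_mul (2 * c)),
    integral_sub J2 (IS.const_mul (2 * c)), integral_add J1 IUU,
    integral_sub ISS (ISU.const_mul 2)]
  have hS0 : ∫ ω, S ω ∂μ = 0 := by
    rw [hSdef, integral_finset_sum _ (fun j _ =>
      ((hM2 j).integrable one_le_two).const_mul (a j))]
    simp only [integral_const_mul]
    simp [hMmean]
  have hSS : ∫ ω, S ω * S ω ∂μ = ∑ j, a j * ∑ k, a k * ∫ ω, M k ω * M j ω ∂μ := by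
    rw [hSdef, aux_sum_mul M S a (fun j => aux_int_mul (hM2 j) hS2)]
    refine Finset.sum_congr rfl fun j _ => ?_
    congr 1
    rw [show (fun ω => M j ω * S ω) = fun ω => S ω * M j ω from funext fun ω => mul_comm _ _]
    exact aux_sum_mul M (M j) a (fun k => aux_int_mul (hM2 k) (hM2 j))
  have hSU : ∫ ω, S ω * U i ω ∂μ = ∑ j, a j * ∫ ω, U j ω * U i ω ∂μ := by
    rw [hSdef, aux_sum_mul M (U i) a (fun j => aux_int_mul (hM2 j) (hU2 i))]
    exact Finset.sum_congr rfl fun j _ => by rw [hkey j i]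
  rw [integral_const_mul 2, integral_const_mul (2*c), integral_const_mul (2*c),
    hS0, hSS, hSU, hUmean i]
  simp

theorem aux_swap3 {n : ℕ} (f : Fin n → Fin n → Fin n → ℝ) :
    ∑ i, ∑ j, ∑ k, f i j k = ∑ j, ∑ k, ∑ i, f i j k := by
  rw [Finset.sum_comm]
  exact Finset.sum_congr rfl fun _ _ => Finset.sum_comm

theorem aux_alg {n : ℕ} (A : Matrix (Fin n) (Fin n) ℝ) (b : Fin n → ℝ)
    (Mm Uu : Matrix (Fin n) (Fin n) ℝ) (hUu : ∀ i j, Uu i j = Uu j i) :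
    ∑ i, ((∑ j, A i j * ∑ k, A i k * Mm k j) - 2 * (∑ j, A i j * Uu j i) + Uu i i + b i ^ 2)
      = ((1 - (A + Aᵀ)) * Uu).trace + (Aᵀ * A * Mm).trace + ∑ i, b i ^ 2 := by
  have h1 : (1 - (A + Aᵀ)) * Uu = Uu - (A * Uu + Aᵀ * Uu) := by noncomm_ring
  rw [h1, trace_sub, trace_add]
  have htA : (Aᵀ * Uu).trace = (A * Uu).trace := by
    simp only [trace, diag, mul_apply, transpose_apply]
    rw [Finset.sum_comm]
    exact Finset.sum_congr rfl fun i _ => Finset.sum_congr rfl fun j _ => by rw [hUu]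
  have htM : (Aᵀ * A * Mm).trace = ∑ i, ∑ j, A i j * ∑ k, A i k * Mm k j := by
    simp only [trace, diag, mul_apply, transpose_apply]
    simp_rw [Finset.sum_mul, Finset.mul_sum]
    rw [aux_swap3, aux_swap3]
    refine Finset.sum_congr rfl fun i _ => Finset.sum_congr rfl fun j _ =>
      Finset.sum_congr rfl fun k _ => by ring
  have htr : (A * Uu).trace = ∑ i, ∑ j, A i j * Uu j i := by
    simp [trace, diag, mul_apply]
  rw [htA, htM, htr, trace]
  simp only [diag, two_mul, Finset.sum_add_distrib, Finset.sum_sub_distrib]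
  ring

theorem aux_main {Ω : Type*} {G F : MeasurableSpace Ω} {μ : Measure Ω}
    [IsProbabilityMeasure μ]
    {n : ℕ} (m : Ω → EuclideanSpace ℝ (Fin n)) (hm : MemLp m 2 μ)
    (hmean : ∫ ω, m ω ∂μ = 0) (hG : G ≤ F)
    (A : Matrix (Fin n) (Fin n) ℝ) (b : EuclideanSpace ℝ (Fin n)) :
    ∫ ω, ∑ i, (A.mulVec (m ω) i - b i - (μ[m|G]) ω i) ^ 2 ∂μ
      = ((1 - (A + Aᵀ)) *
            Matrix.of fun i j : Fin n => ∫ ω, (μ[m|G]) ω i * (μ[m|G]) ω j ∂μ).trace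
        + (Aᵀ * A * Matrix.of fun i j : Fin n => ∫ ω, m ω i * m ω j ∂μ).trace
        + ∑ i, b i ^ 2 := by
  haveI : SigmaFinite (μ.trim hG) := inferInstance
  set M : Fin n → Ω → ℝ := fun j ω => m ω j with hMdef
  set U : Fin n → Ω → ℝ := fun i => μ[M i|G] with hUdef
  have hM2 : ∀ j, MemLp (M j) 2 μ := fun j =>
    (EuclideanSpace.proj (𝕜 := ℝ) j).comp_memLp' hm
  have hU2 : ∀ i, MemLp (U i) 2 μ := fun i => aux_memLp_condexp hG (hM2 i)
  have hcoord : ∀ i, (fun ω => (μ[m|G]) ω i) =ᵐ[μ] U i := fun i =>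
    aux_condexp_coord hG hm i
  have hMmean : ∀ j, ∫ ω, M j ω ∂μ = 0 := by
    intro j
    have h := (EuclideanSpace.proj (𝕜 := ℝ) j).integral_comp_comm
      (hm.integrable one_le_two)
    rw [hmean] at h
    simpa using h
  have hUmean : ∀ i, ∫ ω, U i ω ∂μ = 0 := fun i => by
    rw [hUdef]; rw [integral_condExp hG]; exact hMmean i
  have hkey : ∀ j i, ∫ ω, M j ω * U i ω ∂μ = ∫ ω, U j ω * U i ω ∂μ := fun j i =>
    aux_key hG (hM2 j) (hU2 i)
  have hS2 : ∀ i, MemLp (fun ω => ∑ j, A i j * M j ω) 2 μ := fun i =>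
    memLp_finset_sum _ (fun j _ => (hM2 j).const_mul (A i j))
  have hX2 : ∀ i, MemLp (fun ω => (∑ j, A i j * M j ω) - b i - U i ω) 2 μ := fun i => by
    exact ((hS2 i).sub (memLp_const (b i))).sub (hU2 i)
  have hInt : ∀ i, Integrable (fun ω => ((∑ j, A i j * M j ω) - b i - U i ω) ^ 2) μ :=
    fun i => by exact (hX2 i).integrable_sq
  have hmv : ∀ (ω : Ω) (i : Fin n), A.mulVec (m ω) i = ∑ j, A i j * M j ω := by
    intro ω i; simp [Matrix.mulVec, dotProduct, hMdef]
  have hstep1 : ∫ ω, ∑ i, (A.mulVec (m ω) i - b i - (μ[m|G]) ω i) ^ 2 ∂μ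
      = ∑ i, ∫ ω, ((∑ j, A i j * M j ω) - b i - U i ω) ^ 2 ∂μ := by
    rw [← integral_finset_sum _ (fun i _ => hInt i)]
    refine integral_congr_ae ?_
    have hae : ∀ᵐ ω ∂μ, ∀ i, (μ[m|G]) ω i = U i ω := ae_all_iff.mpr hcoord
    filter_upwards [hae] with ω hω
    refine Finset.sum_congr rfl fun i _ => ?_
    rw [hmv ω i, hω i]
  have hUmat : (Matrix.of fun i j : Fin n => ∫ ω, (μ[m|G]) ω i * (μ[m|G]) ω j ∂μ)
      = Matrix.of fun i j : Fin n => ∫ ω, U i ω * U j ω ∂μ := by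
    ext i j
    refine integral_congr_ae ?_
    filter_upwards [hcoord i, hcoord j] with ω h1 h2
    rw [h1, h2]
  rw [hstep1, hUmat]
  have hclaim : ∀ i, ∫ ω, ((∑ j, A i j * M j ω) - b i - U i ω) ^ 2 ∂μ
      = (∑ j, A i j * ∑ k, A i k *
          ((Matrix.of fun p q : Fin n => ∫ ω, m ω p * m ω q ∂μ) k j))
        - 2 * (∑ j, A i j *
          ((Matrix.of fun p q : Fin n => ∫ ω, U p ω * U q ω ∂μ) j i))
        + ((Matrix.of fun p q : Fin n => ∫ ω, U p ω * U q ω ∂μ) i i) + b i ^ 2 := fun i =>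
    aux_claim M U hM2 hU2 hMmean hUmean hkey (A i) (b i) i
  rw [Finset.sum_congr rfl fun i _ => hclaim i]
  exact aux_alg A b _ _ (fun i j => by
    simp only [Matrix.of_apply]
    exact integral_congr_ae (Filter.Eventually.of_forall fun ω => mul_comm _ _))

end Aux

/-- Multidimensional cheap-talk cost decomposition: with `u = 𝔼[m | 𝒢]`,
`𝔼[‖A m − b − u‖²] = Tr(V Σ_u) + Tr(Aᵀ A Σ_m) + ‖b‖²` where `V = I − (A + Aᵀ)`;
the Euclidean norms are written as sums of squares of coordinates. -/
theorem stmt_6 {Ω : Type*} {F : MeasurableSpace Ω} {μ : Measure Ω} [IsProbabilityMeasure μ]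
    {n : ℕ} (m : Ω → EuclideanSpace ℝ (Fin n)) (hm : MemLp m 2 μ)
    (hmean : ∫ ω, m ω ∂μ = 0) (G : MeasurableSpace Ω) (hG : G ≤ F)
    (A : Matrix (Fin n) (Fin n) ℝ) (b : EuclideanSpace ℝ (Fin n)) :
    ∫ ω, ∑ i, (A.mulVec (m ω) i - b i - (μ[m|G]) ω i) ^ 2 ∂μ
      = ((1 - (A + Aᵀ)) *
            Matrix.of fun i j : Fin n => ∫ ω, (μ[m|G]) ω i * (μ[m|G]) ω j ∂μ).trace
        + (Aᵀ * A * Matrix.of fun i j : Fin n => ∫ ω, m ω i * m ω j ∂μ).trace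
        + ∑ i, b i ^ 2 :=
  aux_main m hm hmean hG A b
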